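/- Let $f: Y \to X$ and $g: Z \to Y$ be finite locally free morphisms of schemes of constant rank, with $g$ of rank $r$. Then the discriminant satisfies $\Delta_{f\circ g} = \mathrm{Nm}_f(\Delta_g) \otimes \Delta_f^{\otimes r}$, under the canonical identification $\det_{\mathcal{O}_X}\mathcal{O}_Z = \mathrm{Nm}_f(\det_{\mathcal{O}_Y}\mathcal{O}_Z) \otimes (\det_{\mathcal{O}_X}\mathcal{O}_Y)^{\otimes r}$. -/

import Mathlib

open Matrix Polynomial

universe u u' v

section Helpers
variable {A : Type u} {B : Type u'} [CommRing A] [CommRing B]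
  {κ : Type v} [Fintype κ] [DecidableEq κ] (φ : B →+* Matrix κ κ A)

lemma det_comp_punit (P : Matrix PUnit PUnit B) :
    (Matrix.compRingEquiv PUnit κ A (φ.mapMatrix P)).det
      = (φ (P PUnit.unit PUnit.unit)).det := by
  rw [show Matrix.compRingEquiv PUnit κ A (φ.mapMatrix P)
      = (φ (P PUnit.unit PUnit.unit)).submatrix (Equiv.punitProd κ) (Equiv.punitProd κ) from by
    ext ⟨⟨⟩, a⟩ ⟨⟨⟩, b⟩; rfl]
  rw [Matrix.det_submatrix_equiv_self]

lemma det_comp_smul_one (r : ℕ) (a : B) :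
    (Matrix.compRingEquiv (Fin r) κ A (φ.mapMatrix (a • (1 : Matrix (Fin r) (Fin r) B)))).det
      = (φ a).det ^ r := by
  rw [show Matrix.compRingEquiv (Fin r) κ A (φ.mapMatrix (a • (1 : Matrix (Fin r) (Fin r) B)))
      = (Matrix.blockDiagonal fun _ : Fin r => φ a).submatrix
          (Equiv.prodComm (Fin r) κ) (Equiv.prodComm (Fin r) κ) from by
    ext ⟨i, p⟩ ⟨j, q⟩
    rcases eq_or_ne i j with h | h <;>
      simp [h, Matrix.blockDiagonal_apply, Matrix.one_apply, Matrix.smul_apply]]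
  rw [Matrix.det_submatrix_equiv_self, Matrix.det_blockDiagonal]
  simp

lemma comp_fromBlocks (r : ℕ) (P : Matrix PUnit PUnit B) (Q : Matrix PUnit (Fin r) B)
    (V : Matrix (Fin r) PUnit B) (S : Matrix (Fin r) (Fin r) B) :
    Matrix.compRingEquiv (PUnit ⊕ Fin r) κ A (φ.mapMatrix (Matrix.fromBlocks P Q V S)) =
      (Matrix.fromBlocks (Matrix.compRingEquiv PUnit κ A (φ.mapMatrix P))
        (Matrix.comp PUnit (Fin r) κ κ A (Q.map φ))
        (Matrix.comp (Fin r) PUnit κ κ A (V.map φ))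
        (Matrix.compRingEquiv (Fin r) κ A (φ.mapMatrix S))).submatrix
          (Equiv.sumProdDistrib PUnit (Fin r) κ) (Equiv.sumProdDistrib PUnit (Fin r) κ) := by
  ext ⟨i, a⟩ ⟨j, b⟩
  rcases i with i | i <;> rcases j with j | j <;> rfl

end Helpers

theorem keyN : ∀ (r : ℕ) {A : Type u} {B : Type u'} [CommRing A] [CommRing B]
    {κ : Type v} [Fintype κ] [DecidableEq κ] (φ : B →+* Matrix κ κ A)
    (t : Matrix (Fin r) (Fin r) B),
    (Matrix.compRingEquiv (Fin r) κ A (φ.mapMatrix t)).det = (φ t.det).det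
  | 0, A, B, _, _, κ, _, _, φ, t => by
    haveI : IsEmpty (Fin 0) := by infer_instance
    simp [Matrix.det_isEmpty]
  | (r+1), A, B, _, _, κ, _, _, φ, t => by
    classical
    -- transport index to PUnit.{1} ⊕ Fin r
    set e' : Fin (r+1) ≃ (PUnit.{1} ⊕ Fin r) :=
      (finSuccEquiv r).trans ((Equiv.optionEquivSumPUnit (Fin r)).trans (Equiv.sumComm (Fin r) PUnit.{1}))
      with he'
    obtain ⟨s, rfl⟩ : ∃ s : Matrix (PUnit.{1} ⊕ Fin r) (PUnit.{1} ⊕ Fin r) B, t = s.submatrix e' e' :=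
      ⟨t.submatrix e'.symm e'.symm, by ext i j; simp⟩
    rw [Matrix.det_submatrix_equiv_self e' s]
    rw [show Matrix.compRingEquiv (Fin (r+1)) κ A (φ.mapMatrix (s.submatrix e' e')) =
        (Matrix.compRingEquiv (PUnit.{1} ⊕ Fin r) κ A (φ.mapMatrix s)).submatrix
          (Equiv.prodCongr e' (Equiv.refl κ)) (Equiv.prodCongr e' (Equiv.refl κ)) from by
      ext ⟨i, a⟩ ⟨j, b⟩; rfl]
    rw [Matrix.det_submatrix_equiv_self]
    -- Step 1: the statement when the pivot's image has regular determinant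
    have key' : ∀ {A' : Type u} {B' : Type u'} [CommRing A'] [CommRing B']
        (φ' : B' →+* Matrix κ κ A') (w : Matrix (PUnit.{1} ⊕ Fin r) (PUnit.{1} ⊕ Fin r) B'),
        IsRegular ((φ' (w (Sum.inl PUnit.unit) (Sum.inl PUnit.unit))).det) →
        (Matrix.compRingEquiv (PUnit.{1} ⊕ Fin r) κ A' (φ'.mapMatrix w)).det = (φ' w.det).det := by
      intro A' B' _ _ φ' w hreg
      set a := w (Sum.inl PUnit.unit) (Sum.inl PUnit.unit) with ha
      set P : Matrix PUnit.{1} PUnit.{1} B' := Matrix.of fun _ _ => a with hP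
      set Q : Matrix PUnit.{1} (Fin r) B' := Matrix.of fun _ j => w (Sum.inl PUnit.unit) (Sum.inr j) with hQ
      set V : Matrix (Fin r) PUnit.{1} B' := Matrix.of fun i _ => w (Sum.inr i) (Sum.inl PUnit.unit) with hV
      set D : Matrix (Fin r) (Fin r) B' := Matrix.of fun i j => w (Sum.inr i) (Sum.inr j) with hD
      have hw : w = Matrix.fromBlocks P Q V D := by
        ext i j; rcases i with ⟨⟩ | i <;> rcases j with ⟨⟩ | j <;> rfl
      set L : Matrix (PUnit.{1} ⊕ Fin r) (PUnit.{1} ⊕ Fin r) B' :=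
        Matrix.fromBlocks 1 0 (-V) (a • 1) with hL
      set E : Matrix (Fin r) (Fin r) B' := a • D - V * Q with hE
      have hLw : L * w = Matrix.fromBlocks P Q 0 E := by
        rw [hL, hw, Matrix.fromBlocks_multiply]
        have h3 : (-V) * P + (a • (1 : Matrix (Fin r) (Fin r) B')) * V = 0 := by
          rw [Matrix.neg_mul, Matrix.smul_mul, Matrix.one_mul]
          ext i ⟨⟩
          simp [Matrix.mul_apply, hP, hV]
          ring
        have h4 : (-V) * Q + (a • (1 : Matrix (Fin r) (Fin r) B')) * D = E := by
          rw [Matrix.neg_mul, Matrix.smul_mul, Matrix.one_mul, hE, sub_eq_neg_add]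
        rw [h3, h4]
        simp
      have hdetL : L.det = a ^ r := by
        rw [hL, Matrix.det_fromBlocks_zero₁₂]
        simp [Matrix.det_smul]
      have hdetLw : (L * w).det = a * E.det := by
        rw [hLw, Matrix.det_fromBlocks_zero₂₁, Matrix.det_unique]
        rfl
      have hBdet : a ^ r * w.det = a * E.det := by
        rw [← hdetL, ← Matrix.det_mul, hdetLw]
      have hzero1 : Matrix.comp PUnit.{1} (Fin r) κ κ A' ((0 : Matrix PUnit.{1} (Fin r) B').map φ') = 0 := by
        ext ⟨i, x⟩ ⟨j, y⟩; simp
      have hzero2 : Matrix.comp (Fin r) PUnit.{1} κ κ A' ((0 : Matrix (Fin r) PUnit.{1} B').map φ') = 0 := by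
        ext ⟨i, x⟩ ⟨j, y⟩; simp
      have hψL : (Matrix.compRingEquiv (PUnit.{1} ⊕ Fin r) κ A' (φ'.mapMatrix L)).det
          = (φ' a).det ^ r := by
        rw [hL, comp_fromBlocks, Matrix.det_submatrix_equiv_self, hzero1,
          Matrix.det_fromBlocks_zero₁₂, det_comp_punit, det_comp_smul_one]
        simp [Matrix.one_apply]
      have hψLw : (Matrix.compRingEquiv (PUnit.{1} ⊕ Fin r) κ A' (φ'.mapMatrix (L * w))).det
          = (φ' a).det * (φ' E.det).det := by
        rw [hLw, comp_fromBlocks, Matrix.det_submatrix_equiv_self, hzero2,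
          Matrix.det_fromBlocks_zero₂₁, det_comp_punit, keyN r φ' E]
        rfl
      have hmm : (φ' a).det ^ r *
            (Matrix.compRingEquiv (PUnit.{1} ⊕ Fin r) κ A' (φ'.mapMatrix w)).det
          = (φ' a).det ^ r * (φ' w.det).det := by
        calc (φ' a).det ^ r * (Matrix.compRingEquiv (PUnit.{1} ⊕ Fin r) κ A' (φ'.mapMatrix w)).det
            = (Matrix.compRingEquiv (PUnit.{1} ⊕ Fin r) κ A' (φ'.mapMatrix L)).det *
              (Matrix.compRingEquiv (PUnit.{1} ⊕ Fin r) κ A' (φ'.mapMatrix w)).det := by rw [hψL]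
          _ = (Matrix.compRingEquiv (PUnit.{1} ⊕ Fin r) κ A' (φ'.mapMatrix (L * w))).det := by
              rw [_root_.map_mul, _root_.map_mul, Matrix.det_mul]
          _ = (φ' a).det * (φ' E.det).det := hψLw
          _ = (φ' (a * E.det)).det := by rw [_root_.map_mul, Matrix.det_mul]
          _ = (φ' (a ^ r * w.det)).det := by rw [hBdet]
          _ = (φ' a).det ^ r * (φ' w.det).det := by
              rw [_root_.map_mul, _root_.map_pow, Matrix.det_mul, Matrix.det_pow]
      exact (hreg.left.pow r) hmm
    -- Step 2: polynomial trick
    have hcommX : ∀ (x : Matrix κ κ (Polynomial A)),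
        Commute x (Matrix.scalar κ (Polynomial.X : Polynomial A)) :=
      fun x => (Matrix.scalar_commute _ (fun r' => Polynomial.commute_X r') x).symm
    set φP : Polynomial B →+* Matrix κ κ (Polynomial A) :=
      Polynomial.eval₂RingHom' (((Polynomial.C : A →+* Polynomial A).mapMatrix).comp φ)
        (Matrix.scalar κ Polynomial.X) (fun b => hcommX _) with hφP
    have hφPC : ∀ x : B, φP (Polynomial.C x) = (φ x).map Polynomial.C := by
      intro x
      simp [hφP]
    have hφPX : φP Polynomial.X = Matrix.scalar κ Polynomial.X := by
      simp [hφP]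
    set s' : Matrix (PUnit.{1} ⊕ Fin r) (PUnit.{1} ⊕ Fin r) (Polynomial B) :=
      Matrix.scalar _ Polynomial.X + s.map Polynomial.C with hs'
    have hpivot : IsRegular ((φP (s' (Sum.inl PUnit.unit) (Sum.inl PUnit.unit))).det) := by
      have hp1 : s' (Sum.inl PUnit.unit) (Sum.inl PUnit.unit)
          = Polynomial.X + Polynomial.C (s (Sum.inl PUnit.unit) (Sum.inl PUnit.unit)) := by
        simp [hs', Matrix.scalar_apply, Matrix.diagonal_apply]
      have hch : Matrix.scalar κ (Polynomial.X : Polynomial A)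
            + (φ (s (Sum.inl PUnit.unit) (Sum.inl PUnit.unit))).map Polynomial.C
          = Matrix.charmatrix (-(φ (s (Sum.inl PUnit.unit) (Sum.inl PUnit.unit)))) := by
        ext i j
        simp [Matrix.charmatrix_apply, Matrix.scalar_apply, Matrix.diagonal_apply, Matrix.add_apply,
          sub_eq_add_neg]
      rw [hp1, _root_.map_add, hφPX, hφPC, hch]
      exact (Matrix.charpoly_monic _).isRegular
    have hmain' := key' φP s' hpivot
    set ε : Polynomial A →+* A := Polynomial.evalRingHom 0 with hε
    set εB : Polynomial B →+* B := Polynomial.evalRingHom 0 with hεB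
    have hcompApp : ∀ p : Polynomial B, (φP p).map ε = φ (εB p) := by
      have hcomp : (ε.mapMatrix).comp φP = φ.comp εB := by
        apply Polynomial.ringHom_ext
        · intro x
          ext i j
          simp [hφPC, hε, hεB]
        · ext i j
          simp [hφPX, hε, hεB, Matrix.scalar_apply, Matrix.diagonal_apply, apply_ite]
      intro p
      have := DFunLike.congr_fun hcomp p
      simpa [RingHom.mapMatrix_apply] using this
    have hs'ε : ∀ i j, εB (s' i j) = s i j := by
      intro i j
      simp [hs', hεB, Matrix.scalar_apply, Matrix.diagonal_apply, Matrix.add_apply, apply_ite]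
    have h1 : ε ((Matrix.compRingEquiv (PUnit.{1} ⊕ Fin r) κ (Polynomial A) (φP.mapMatrix s')).det)
        = (Matrix.compRingEquiv (PUnit.{1} ⊕ Fin r) κ A (φ.mapMatrix s)).det := by
      rw [RingHom.map_det]
      congr 1
      ext ⟨i, x⟩ ⟨j, y⟩
      have h := congrFun (congrFun (hcompApp (s' i j)) x) y
      simp only [RingHom.mapMatrix_apply, Matrix.compRingEquiv_apply] at *
      simpa [Matrix.map_apply, hs'ε i j] using h
    have h2 : ε ((φP s'.det).det) = (φ s.det).det := by
      rw [RingHom.map_det]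
      have hd : εB s'.det = s.det := by
        rw [RingHom.map_det]
        congr 1
        ext i j
        simp [RingHom.mapMatrix_apply, Matrix.map_apply, hs'ε i j]
      rw [show ε.mapMatrix (φP s'.det) = φ (εB s'.det) from by
        rw [RingHom.mapMatrix_apply, hcompApp], hd]
    rw [← h1, ← h2, hmain']

/-- Transitivity of the discriminant, affine version:  for finite free ring extensions
`A ⊆ B ⊆ C`, with `B` free of rank `m` over `A` (basis `b`) and `C` free of rank `r` over `B`
(basis `c`), the discriminant of `C` over `A` with respect to the compatible basis `b • c`
equals the norm (from `B` to `A`) of the discriminant of `C` over `B` times the `r`-th power of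
the discriminant of `B` over `A`. -/
theorem statement7 {A B C : Type*} [CommRing A] [CommRing B] [CommRing C]
    [Algebra A B] [Algebra B C] [Algebra A C] [IsScalarTower A B C]
    (m r : ℕ) (b : Module.Basis (Fin m) A B) (c : Module.Basis (Fin r) B C) :
    Algebra.discr A (b.smulTower c) =
      Algebra.norm A (Algebra.discr B c) * Algebra.discr A b ^ r := by
  classical
  set G := Algebra.traceMatrix A b with hG
  set t := Algebra.traceMatrix B c with ht
  set φ : B →+* Matrix (Fin m) (Fin m) A := (Algebra.leftMulMatrix b).toRingHom with hφ
  have hentry : Algebra.traceMatrix A (b.smulTower c) =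
      Matrix.blockDiagonal (fun _ : Fin r => G) *
        ((Matrix.compRingEquiv (Fin r) (Fin m) A (φ.mapMatrix t)).submatrix
          (Equiv.prodComm (Fin m) (Fin r)) (Equiv.prodComm (Fin m) (Fin r))) := by
    ext ⟨x, i⟩ ⟨z, k⟩
    have lhs_eq : Algebra.traceMatrix A (b.smulTower c) (x, i) (z, k)
        = ∑ y : Fin m, G x y * (Algebra.leftMulMatrix b (t i k)) y z := by
      rw [Algebra.traceMatrix_apply, Algebra.traceForm_apply, Module.Basis.smulTower_apply,
        Module.Basis.smulTower_apply]
      dsimp only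
      rw [smul_mul_smul_comm, ← Algebra.trace_trace_of_basis b c, LinearMap.map_smul, smul_eq_mul]
      have htik : Algebra.trace B C (c i * c k) = t i k := by
        rw [ht, Algebra.traceMatrix_apply, Algebra.traceForm_apply]
      rw [htik]
      have hxz : (b x * b z) * (t i k) = b x * ((t i k) * b z) := by ring
      rw [hxz, show (t i k) * b z = ∑ y, Algebra.leftMulMatrix b (t i k) y z • b y from by
        simp only [Algebra.leftMulMatrix_eq_repr_mul]
        exact (b.sum_repr _).symm]
      rw [Finset.mul_sum, map_sum]
      refine Finset.sum_congr rfl fun y _ => ?_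
      rw [mul_smul_comm, LinearMap.map_smul, smul_eq_mul, hG, Algebra.traceMatrix_apply,
        Algebra.traceForm_apply]
      ring
    rw [lhs_eq, Matrix.mul_apply]
    rw [Fintype.sum_prod_type]
    refine Finset.sum_congr rfl fun y _ => ?_
    simp [Matrix.blockDiagonal_apply, Matrix.compRingEquiv_apply, ite_mul, zero_mul]
    rfl
  rw [Algebra.discr_def, hentry, Matrix.det_mul, Matrix.det_submatrix_equiv_self,
    Matrix.det_blockDiagonal, keyN r φ t]
  rw [show (φ t.det).det = Algebra.norm A (Algebra.discr B c) from
    (Algebra.norm_eq_matrix_det b _).symm]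
  rw [show G.det = Algebra.discr A b from rfl]
  rw [Finset.prod_const, Finset.card_univ, Fintype.card_fin]
  ring
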